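/- Gauge invariance of the single-scattering kernel: Let n ≥ 2, R > 0, let a : ℝⁿ × S^{n-1} → ℝ be bounded measurable, let k : ℝⁿ × S^{n-1} × S^{n-1} → ℝ, and let φ : ℝⁿ × S^{n-1} → (0,∞) be such that for every (x,θ) the function s ↦ log φ(x+sθ,θ) is continuously differentiable on ℝ, with derivative at s denoted D(x+sθ,θ), and such that φ(x,θ) = 1 whenever |x| = R. Set a'(y,ω) := a(y,ω) − D(y,ω) and k'(y,θ',θ) := (φ(y,θ)/φ(y,θ')) k(y,θ',θ). Define, for |x'| = R, ⟨x',θ'⟩ ≤ 0, 0 ≤ t ≤ τ₊(x',θ'), and θ ∈ S^{n-1}, F_a(t,x',θ',θ) := exp(−∫₀^{τ₊(x'+tθ', θ)} a(x'+tθ'+sθ, θ) ds) · exp(−∫₀^{t} a(x'+sθ', θ') ds), and F_{a'} analogously. Then F_{a'}(t,x',θ',θ) · k'(x'+tθ', θ', θ) = F_a(t,x',θ',θ) · k(x'+tθ', θ', θ). -/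

import Mathlib

/-- Forward exit time of the ball of radius `R`. -/
noncomputable def tauP {n : ℕ} (R : ℝ) (x θ : EuclideanSpace ℝ (Fin n)) : ℝ :=
  -(inner ℝ x θ : ℝ) + Real.sqrt (R ^ 2 - ‖x‖ ^ 2 + (inner ℝ x θ : ℝ) ^ 2)

/-- The single-scattering attenuation factor along the broken path entering at
`x'` in direction `θ'`, scattering at `x' + tθ'` into direction `θ`. -/
noncomputable def Fatt {n : ℕ} (R : ℝ)
    (a : EuclideanSpace ℝ (Fin n) → EuclideanSpace ℝ (Fin n) → ℝ)
    (t : ℝ) (x' θ' θ : EuclideanSpace ℝ (Fin n)) : ℝ :=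
  Real.exp (-(∫ s in (0 : ℝ)..(tauP R (x' + t • θ') θ), a (x' + t • θ' + s • θ) θ)) *
    Real.exp (-(∫ s in (0 : ℝ)..t, a (x' + s • θ') θ'))

lemma bdd_intervalIntegrable {f : ℝ → ℝ} (hf : Measurable f) {M : ℝ} (hM : ∀ s, |f s| ≤ M)
    (u v : ℝ) : IntervalIntegrable f MeasureTheory.volume u v :=
  IntervalIntegrable.mono_fun' (g := fun _ => M) intervalIntegrable_const
    hf.aestronglyMeasurable (Filter.Eventually.of_forall fun s => by simpa using hM s)

lemma exit_norm {n : ℕ} {R : ℝ} (hR : 0 ≤ R) (x θ : EuclideanSpace ℝ (Fin n))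
    (hθ : ‖θ‖ = 1) (hx : ‖x‖ ≤ R) : ‖x + tauP R x θ • θ‖ = R := by
  have h0 : (0:ℝ) ≤ R ^ 2 - ‖x‖ ^ 2 + (inner ℝ x θ : ℝ) ^ 2 := by
    nlinarith [norm_nonneg x, sq_nonneg (inner ℝ x θ : ℝ)]
  have hs := Real.sq_sqrt h0
  have hsq : ‖x + tauP R x θ • θ‖ ^ 2 = R ^ 2 := by
    rw [@norm_add_sq_real, real_inner_smul_right, norm_smul, hθ]
    simp only [Real.norm_eq_abs, mul_one, tauP]
    rw [sq_abs]; nlinarith [hs]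
  calc ‖x + tauP R x θ • θ‖ = Real.sqrt (‖x + tauP R x θ • θ‖ ^ 2) :=
        (Real.sqrt_sq (norm_nonneg _)).symm
    _ = R := by rw [hsq, Real.sqrt_sq hR]

lemma interior_norm {n : ℕ} {R : ℝ} (hR : 0 ≤ R) (x θ : EuclideanSpace ℝ (Fin n))
    (hθ : ‖θ‖ = 1) (hx : ‖x‖ = R) (hin : (inner ℝ x θ : ℝ) ≤ 0)
    {t : ℝ} (ht0 : 0 ≤ t) (ht1 : t ≤ tauP R x θ) : ‖x + t • θ‖ ≤ R := by
  have hτ : tauP R x θ = -2 * (inner ℝ x θ : ℝ) := by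
    unfold tauP
    rw [hx]
    have : R ^ 2 - R ^ 2 + (inner ℝ x θ : ℝ) ^ 2 = (inner ℝ x θ : ℝ) ^ 2 := by ring
    rw [this, Real.sqrt_sq_eq_abs, abs_of_nonpos hin]; ring
  have hsq : ‖x + t • θ‖ ^ 2 ≤ R ^ 2 := by
    rw [@norm_add_sq_real, real_inner_smul_right, norm_smul, hθ]
    simp only [Real.norm_eq_abs, mul_one, sq_abs]
    rw [hx]
    nlinarith [hτ ▸ ht1]
  calc ‖x + t • θ‖ = Real.sqrt (‖x + t • θ‖ ^ 2) := (Real.sqrt_sq (norm_nonneg _)).symm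
    _ ≤ Real.sqrt (R ^ 2) := Real.sqrt_le_sqrt hsq
    _ = R := Real.sqrt_sq hR

/-- Gauge invariance of the single-scattering kernel. -/
theorem gauge_invariance_single_scattering {n : ℕ} (hn : 2 ≤ n) (R : ℝ) (hR : 0 < R)
    (a : EuclideanSpace ℝ (Fin n) → EuclideanSpace ℝ (Fin n) → ℝ)
    (hameas : Measurable (Function.uncurry a))
    (habd : ∃ M, ∀ y ω, |a y ω| ≤ M)
    (k : EuclideanSpace ℝ (Fin n) → EuclideanSpace ℝ (Fin n) →
      EuclideanSpace ℝ (Fin n) → ℝ)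
    (φ D : EuclideanSpace ℝ (Fin n) → EuclideanSpace ℝ (Fin n) → ℝ)
    (hφpos : ∀ x θ, ‖θ‖ = 1 → 0 < φ x θ)
    (hD : ∀ x θ : EuclideanSpace ℝ (Fin n), ‖θ‖ = 1 → ∀ s : ℝ,
      HasDerivAt (fun u : ℝ => Real.log (φ (x + u • θ) θ)) (D (x + s • θ) θ) s)
    (hDcont : ∀ x θ : EuclideanSpace ℝ (Fin n), ‖θ‖ = 1 →
      Continuous fun s : ℝ => D (x + s • θ) θ)
    (hφ1 : ∀ x θ : EuclideanSpace ℝ (Fin n), ‖x‖ = R → ‖θ‖ = 1 → φ x θ = 1)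
    (a' : EuclideanSpace ℝ (Fin n) → EuclideanSpace ℝ (Fin n) → ℝ)
    (ha' : ∀ y ω, a' y ω = a y ω - D y ω)
    (k' : EuclideanSpace ℝ (Fin n) → EuclideanSpace ℝ (Fin n) →
      EuclideanSpace ℝ (Fin n) → ℝ)
    (hk' : ∀ y θ' θ, k' y θ' θ = (φ y θ / φ y θ') * k y θ' θ) :
    ∀ (x' θ' θ : EuclideanSpace ℝ (Fin n)) (t : ℝ),
      ‖x'‖ = R → ‖θ'‖ = 1 → (inner ℝ x' θ' : ℝ) ≤ 0 →
      0 ≤ t → t ≤ tauP R x' θ' → ‖θ‖ = 1 →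
      Fatt R a' t x' θ' θ * k' (x' + t • θ') θ' θ =
        Fatt R a t x' θ' θ * k (x' + t • θ') θ' θ := by
  intro x' θ' θ t hx' hθ' hin ht0 ht1 hθ
  obtain ⟨M, hM⟩ := habd
  set y := x' + t • θ' with hy
  set τ := tauP R y θ with hτ
  -- measurability/integrability of a along lines
  have haInt : ∀ (x ω : EuclideanSpace ℝ (Fin n)) (u v : ℝ),
      IntervalIntegrable (fun s => a (x + s • ω) ω) MeasureTheory.volume u v := by
    intro x ω u v
    apply bdd_intervalIntegrable _ (fun s => hM _ _) u v
    exact hameas.comp ((Continuous.measurable (by continuity)).prodMk measurable_const)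
  have hDInt : ∀ (x ω : EuclideanSpace ℝ (Fin n)), ‖ω‖ = 1 → ∀ u v : ℝ,
      IntervalIntegrable (fun s => D (x + s • ω) ω) MeasureTheory.volume u v :=
    fun x ω hω u v => (hDcont x ω hω).intervalIntegrable u v
  -- FTC for D
  have hFTC : ∀ (x ω : EuclideanSpace ℝ (Fin n)), ‖ω‖ = 1 → ∀ T : ℝ,
      ∫ s in (0:ℝ)..T, D (x + s • ω) ω =
        Real.log (φ (x + T • ω) ω) - Real.log (φ x ω) := by
    intro x ω hω T
    have := intervalIntegral.integral_eq_sub_of_hasDerivAt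
      (f := fun u : ℝ => Real.log (φ (x + u • ω) ω))
      (f' := fun s => D (x + s • ω) ω)
      (fun s _ => hD x ω hω s) (hDInt x ω hω 0 T)
    simpa using this
  -- geometric facts
  have hyle : ‖y‖ ≤ R := interior_norm hR.le x' θ' hθ' hx' hin ht0 ht1
  have hexit : ‖y + τ • θ‖ = R := exit_norm hR.le y θ hθ hyle
  have hφexit : φ (y + τ • θ) θ = 1 := hφ1 _ _ hexit hθ
  have hφx' : φ x' θ' = 1 := hφ1 _ _ hx' hθ'
  -- the two D-integrals
  have hID1 : ∫ s in (0:ℝ)..τ, D (y + s • θ) θ = - Real.log (φ y θ) := by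
    rw [hFTC y θ hθ τ, hφexit, Real.log_one]; ring
  have hID2 : ∫ s in (0:ℝ)..t, D (x' + s • θ') θ' = Real.log (φ y θ') := by
    rw [hFTC x' θ' hθ' t, hφx', Real.log_one]; ring
  -- split the a' integrals
  have hI1 : ∫ s in (0:ℝ)..τ, a' (y + s • θ) θ =
      (∫ s in (0:ℝ)..τ, a (y + s • θ) θ) - ∫ s in (0:ℝ)..τ, D (y + s • θ) θ := by
    simp only [ha']
    exact intervalIntegral.integral_sub (haInt y θ 0 τ) (hDInt y θ hθ 0 τ)
  have hI2 : ∫ s in (0:ℝ)..t, a' (x' + s • θ') θ' =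
      (∫ s in (0:ℝ)..t, a (x' + s • θ') θ') - ∫ s in (0:ℝ)..t, D (x' + s • θ') θ' := by
    simp only [ha']
    exact intervalIntegral.integral_sub (haInt x' θ' 0 t) (hDInt x' θ' hθ' 0 t)
  have hφyθ := hφpos y θ hθ
  have hφyθ' := hφpos y θ' hθ'
  have hFatt : Fatt R a' t x' θ' θ = Fatt R a t x' θ' θ * (φ y θ' / φ y θ) := by
    unfold Fatt
    rw [← hy, ← hτ, hI1, hI2, hID1, hID2]
    rw [neg_sub, neg_sub]
    rw [sub_eq_add_neg, sub_eq_add_neg, Real.exp_add, Real.exp_add]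
    rw [Real.exp_neg, Real.exp_neg, Real.exp_log hφyθ, Real.exp_log hφyθ']
    field_simp
  rw [hFatt, hk']
  field_simp
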